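/- Let A be a circular automaton, σ a congruence, and (p₁,q₁), (p₂,q₂) ∈ σ with gcd(d(p₁,q₁), d(p₂,q₂)) = k. Then there exists (p,q) ∈ σ with d(p,q) = k. -/

import Mathlib

def wordAct {n : ℕ} {A : Type} (δ : Fin n → A → Fin n) (p : Fin n) (u : List A) : Fin n :=
  u.foldl δ p

noncomputable def relDist {n : ℕ} {A : Type} (δ : Fin n → A → Fin n) (a : A) (p q : Fin n) : ℕ :=
  sInf {k : ℕ | wordAct δ p (List.replicate k a) = q ∨ wordAct δ q (List.replicate k a) = p}

/-- The cyclic successor `q ↦ q + 1 (mod n)` on `Fin n`. -/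
def cyc {n : ℕ} (q : Fin n) : Fin n :=
  ⟨(q.val + 1) % n, Nat.mod_lt _ (by have := q.isLt; omega)⟩

def IsCirculating {n : ℕ} {A : Type} (δ : Fin n → A → Fin n) (a : A) : Prop :=
  ∀ q : Fin n, δ q a = cyc q

def IsContracting {n : ℕ} {A : Type} (δ : Fin n → A → Fin n) (a : A) : Prop :=
  ∀ p q : Fin n, 1 < relDist δ a p q →
    ∃ u : List A, 1 ≤ relDist δ a (wordAct δ p u) (wordAct δ q u) ∧
      relDist δ a (wordAct δ p u) (wordAct δ q u) < relDist δ a p q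

def IsWeaklyContractingPair {n : ℕ} {A : Type} (δ : Fin n → A → Fin n) (a : A) (p q : Fin n) : Prop :=
  ∀ m : ℕ, (∀ u : List A, wordAct δ p u ≠ wordAct δ q u →
      m ∣ Nat.gcd (relDist δ a (wordAct δ p u) (wordAct δ q u)) n) → m = 1

def IsWeaklyContracting {n : ℕ} {A : Type} (δ : Fin n → A → Fin n) (a : A) : Prop :=
  ∀ p q : Fin n, p ≠ q → IsWeaklyContractingPair δ a p q

def IsCongruence {n : ℕ} {A : Type} (δ : Fin n → A → Fin n) (σ : Fin n → Fin n → Prop) : Prop :=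
  Equivalence σ ∧ ∀ (p q : Fin n) (u : List A), σ p q → σ (wordAct δ p u) (wordAct δ q u)

def IsSimple {n : ℕ} {A : Type} (δ : Fin n → A → Fin n) : Prop :=
  ∀ σ : Fin n → Fin n → Prop, IsCongruence δ σ → (∀ x y, σ x y → x = y) ∨ (∀ x y, σ x y)

def IsSynchronizing {n : ℕ} {A : Type} (δ : Fin n → A → Fin n) : Prop :=
  ∃ u : List A, ∀ p q : Fin n, wordAct δ p u = wordAct δ q u

open Fin.CommRing

theorem stmt7 (n : ℕ) (A : Type) (δ : Fin n → A → Fin n) (a : A)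
    (ha : IsCirculating δ a) (σ : Fin n → Fin n → Prop) (hσ : IsCongruence δ σ)
    (p₁ q₁ p₂ q₂ : Fin n) (h1 : σ p₁ q₁) (h2 : σ p₂ q₂) (k : ℕ)
    (hk : Nat.gcd (relDist δ a p₁ q₁) (relDist δ a p₂ q₂) = k) :
    ∃ p q : Fin n, σ p q ∧ relDist δ a p q = k := by
  haveI : NeZero n := ⟨by rintro rfl; exact p₁.elim0⟩
  have hn : 0 < n := Nat.pos_of_ne_zero (NeZero.ne n)
  -- action of a^m
  have hact : ∀ (m : ℕ) (p : Fin n), wordAct δ p (List.replicate m a) = p + (m : Fin n) := by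
    intro m
    induction m with
    | zero => intro p; simp [wordAct]
    | succ m ih =>
      intro p
      rw [List.replicate_succ]
      have step : wordAct δ p (a :: List.replicate m a)
          = wordAct δ (δ p a) (List.replicate m a) := rfl
      rw [step, ha p]
      have hcyc : cyc p = p + 1 := by
        apply Fin.ext
        simp only [cyc, Fin.add_def, Fin.val_one']
        conv_lhs => rw [Nat.add_mod]
        conv_rhs => rw [Nat.add_mod, Nat.mod_mod_of_dvd _ dvd_rfl]
      rw [ih, hcyc]
      push_cast
      ring
  -- the distance formula
  have hdist : ∀ (p c : Fin n), relDist δ a p (p + c) = min c.val (-c).val := by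
    intro p c
    have hset : {j : ℕ | wordAct δ p (List.replicate j a) = p + c ∨
        wordAct δ (p + c) (List.replicate j a) = p}
        = {j : ℕ | (j : Fin n) = c ∨ (j : Fin n) = -c} := by
      ext j
      simp only [Set.mem_setOf_eq, hact]
      constructor
      · rintro (h | h)
        · exact Or.inl (add_left_cancel h)
        · right
          rw [add_assoc] at h
          have h0 : c + (j : Fin n) = 0 := add_left_cancel (h.trans (add_zero p).symm)
          exact eq_neg_of_add_eq_zero_right h0
      · rintro (h | h)
        · left; rw [h]
        · right; rw [h]; ring
    have h1m : c.val ∈ {j : ℕ | (j : Fin n) = c ∨ (j : Fin n) = -c} :=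
      Or.inl (Fin.cast_val_eq_self c)
    have h2m : (-c).val ∈ {j : ℕ | (j : Fin n) = c ∨ (j : Fin n) = -c} :=
      Or.inr (Fin.cast_val_eq_self (-c))
    show sInf _ = _
    rw [hset]
    apply le_antisymm
    · rcases le_total c.val (-c).val with h | h
      · rw [min_eq_left h]; exact Nat.sInf_le h1m
      · rw [min_eq_right h]; exact Nat.sInf_le h2m
    · apply le_csInf ⟨c.val, h1m⟩
      rintro j (hj | hj)
      · have hv : c.val = j % n := by rw [← hj, Fin.val_natCast]
        exact le_trans (min_le_left _ _) (hv ▸ Nat.mod_le j n)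
      · have hv : (-c).val = j % n := by rw [← hj, Fin.val_natCast]
        exact le_trans (min_le_right _ _) (hv ▸ Nat.mod_le j n)
  -- shifting a congruent pair
  have hshift : ∀ (p q c : Fin n), σ p q → σ (p + c) (q + c) := by
    intro p q c h
    have := hσ.2 p q (List.replicate c.val a) h
    rwa [hact, hact, Fin.cast_val_eq_self] at this
  -- the subgroup of shifts connected to p₁
  have hTadd : ∀ c c' : Fin n, σ p₁ (p₁ + c) → σ p₁ (p₁ + c') → σ p₁ (p₁ + (c + c')) := by
    intro c c' h h'
    have h2' := hshift _ _ c' h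
    have h3 := hσ.1.trans h' h2'
    rwa [show p₁ + c + c' = p₁ + (c + c') by ring] at h3
  have hTneg : ∀ c : Fin n, σ p₁ (p₁ + c) → σ p₁ (p₁ + (-c)) := by
    intro c h
    have h2' := hσ.1.symm (hshift _ _ (-c) h)
    rwa [show p₁ + c + -c = p₁ by ring] at h2'
  let G : AddSubgroup (Fin n) :=
    { carrier := {c | σ p₁ (p₁ + c)}
      zero_mem' := by simpa using hσ.1.refl p₁
      add_mem' := fun {c c'} h h' => hTadd c c' h h'
      neg_mem' := fun {c} h => hTneg c h }
  have he₁ : (q₁ - p₁) ∈ G := by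
    show σ p₁ (p₁ + (q₁ - p₁))
    rwa [show p₁ + (q₁ - p₁) = q₁ by ring]
  have he₂ : (q₂ - p₂) ∈ G := by
    have h3 := hshift p₂ q₂ (p₁ - p₂) h2
    rwa [show p₂ + (p₁ - p₂) = p₁ by ring,
      show q₂ + (p₁ - p₂) = p₁ + (q₂ - p₂) by ring] at h3
  set d₁ := relDist δ a p₁ q₁ with hd₁def
  set d₂ := relDist δ a p₂ q₂ with hd₂def
  have hd1 : d₁ = min (q₁ - p₁).val (-(q₁ - p₁)).val := by
    have := hdist p₁ (q₁ - p₁)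
    rwa [show p₁ + (q₁ - p₁) = q₁ by ring] at this
  have hd2 : d₂ = min (q₂ - p₂).val (-(q₂ - p₂)).val := by
    have := hdist p₂ (q₂ - p₂)
    rwa [show p₂ + (q₂ - p₂) = q₂ by ring] at this
  have hdG : ∀ (e : Fin n), e ∈ G → ((min e.val (-e).val : ℕ) : Fin n) ∈ G := by
    intro e he
    rcases le_total e.val (-e).val with h | h
    · rw [min_eq_left h, Fin.cast_val_eq_self]; exact he
    · rw [min_eq_right h, Fin.cast_val_eq_self]; exact G.neg_mem he
  have hd₁G : ((d₁ : ℕ) : Fin n) ∈ G := by rw [hd1]; exact hdG _ he₁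
  have hd₂G : ((d₂ : ℕ) : Fin n) ∈ G := by rw [hd2]; exact hdG _ he₂
  -- Bézout
  have hkG : ((k : ℕ) : Fin n) ∈ G := by
    have hb := Nat.gcd_eq_gcd_ab d₁ d₂
    have hcast : (k : Fin n) = (Nat.gcdA d₁ d₂ : Fin n) * (d₁ : Fin n)
        + (Nat.gcdB d₁ d₂ : Fin n) * (d₂ : Fin n) := by
      have hc := congrArg (fun z : ℤ => (z : Fin n)) hb
      rw [hk] at hc
      push_cast at hc
      rw [hc]; ring
    rw [hcast, ← zsmul_eq_mul, ← zsmul_eq_mul]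
    exact G.add_mem (G.zsmul_mem hd₁G _) (G.zsmul_mem hd₂G _)
  -- bound: k = 0 or 2k ≤ n
  have hhalf : ∀ c : Fin n, min c.val (-c).val = 0 ∨ 2 * min c.val (-c).val ≤ n := by
    intro c
    have hneg : (-c).val = (n - c.val) % n := by rw [Fin.neg_def]
    rcases Nat.eq_zero_or_pos c.val with h | h
    · left; rw [min_eq_left]; exact h; omega
    · right
      have hlt := c.isLt
      rw [hneg, Nat.mod_eq_of_lt (by omega : n - c.val < n)]
      rcases le_total c.val (n - c.val) with h' | h'
      · rw [min_eq_left h']; omega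
      · rw [min_eq_right h']; omega
  have hhalf1 : d₁ = 0 ∨ 2 * d₁ ≤ n := hd1 ▸ hhalf (q₁ - p₁)
  have hhalf2 : d₂ = 0 ∨ 2 * d₂ ≤ n := hd2 ▸ hhalf (q₂ - p₂)
  have g1 : d₁ = 0 ∨ k ≤ d₁ := by
    rcases Nat.eq_zero_or_pos d₁ with h | h
    · exact Or.inl h
    · exact Or.inr (Nat.le_of_dvd h (hk ▸ Nat.gcd_dvd_left d₁ d₂))
  have g2 : d₂ = 0 ∨ k ≤ d₂ := by
    rcases Nat.eq_zero_or_pos d₂ with h | h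
    · exact Or.inl h
    · exact Or.inr (Nat.le_of_dvd h (hk ▸ Nat.gcd_dvd_right d₁ d₂))
  have gz : d₁ = 0 → d₂ = 0 → k = 0 := by
    intro h h'; rw [← hk, h, h']; simp
  have h2k : k = 0 ∨ 2 * k ≤ n := by omega
  -- conclusion
  refine ⟨p₁, p₁ + (k : Fin n), hkG, ?_⟩
  rw [hdist]
  have hkn : k < n := by omega
  have hv : ((k : Fin n)).val = k := by rw [Fin.val_natCast, Nat.mod_eq_of_lt hkn]
  have hneg : (-(k : Fin n)).val = (n - ((k : Fin n)).val) % n := by rw [Fin.neg_def]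
  rw [hv] at hneg
  rcases Nat.eq_zero_or_pos k with h | h
  · subst h
    rw [hv, hneg]
    simp
  · have h2 : 2 * k ≤ n := by omega
    rw [hv, hneg, Nat.mod_eq_of_lt (by omega : n - k < n)]
    exact min_eq_left (by omega)
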